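/- arXiv:1901.09319 — 2 statements merged into one kernel-verified Lean document; each statement's English description precedes it below -/
import Mathlib

section
/- Let R[x₁, …, xₙ] be a polynomial ring over a field, B a commutative R-algebra, and K ⊆ B ⊗ R[x₁,…,xₙ] a subset stable under both the transposition operators s_k and the difference operators ∂_k (for all 1 ≤ k < n). Let f(t) = Σ_{j=0}^{d} a_j t^j be a polynomial with coefficients a_j ∈ B, with d < n. If f(x₁) ∈ K then a_d ∈ K, where a_d is obtained as (−1)^d ∂_d ∂_{d−1} ⋯ ∂_1 f(x₁). -/
open MvPolynomial

namespace Stmt16Aux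

variable {R S : Type*} [CommRing R] [CommRing S]

/-- Complete homogeneous "polynomial" of degree `e` in a list of ring elements. -/
def Hc : List R → ℕ → R
  | [], e => if e = 0 then 1 else 0
  | y :: t, e => ∑ i ∈ Finset.range (e + 1), y ^ i * Hc t (e - i)

lemma Hc_nil (e : ℕ) : Hc ([] : List R) e = if e = 0 then 1 else 0 := rfl

lemma Hc_cons (y : R) (t : List R) (e : ℕ) :
    Hc (y :: t) e = ∑ i ∈ Finset.range (e + 1), y ^ i * Hc t (e - i) := rfl

lemma Hc_zero : ∀ l : List R, Hc l 0 = 1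
  | [] => rfl
  | y :: t => by simp [Hc_cons, Hc_zero t]

lemma Hc_cons_succ (y : R) (t : List R) (e : ℕ) :
    Hc (y :: t) (e + 1) = Hc t (e + 1) + y * Hc (y :: t) e := by
  rw [Hc_cons, Hc_cons, Finset.sum_range_succ', Finset.mul_sum]
  simp only [pow_succ', Nat.succ_sub_succ, pow_zero, one_mul, Nat.sub_zero, mul_assoc]
  ring

lemma Hc_singleton (y : R) : ∀ e, Hc [y] e = y ^ e
  | 0 => by rw [Hc_zero, pow_zero]
  | e + 1 => by
      rw [Hc_cons_succ, Hc_singleton y e, Hc_nil]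
      simp [pow_succ']

lemma map_Hc (φ : R →+* S) : ∀ (l : List R) (e : ℕ), φ (Hc l e) = Hc (l.map φ) e
  | [], e => by simp [Hc_nil, apply_ite φ]
  | y :: t, e => by
      simp only [Hc_cons, map_sum, map_mul, map_pow, List.map_cons, map_Hc φ t]

lemma Hc_sub (y z : R) (t : List R) : ∀ e : ℕ,
    Hc (y :: t) (e + 1) - Hc (z :: t) (e + 1) = (y - z) * Hc (y :: z :: t) e
  | 0 => by
      rw [Hc_cons_succ, Hc_cons_succ, Hc_zero, Hc_zero, Hc_zero]
      ring
  | e + 1 => by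
      have ih := Hc_sub y z t e
      rw [Hc_cons_succ y t (e + 1), Hc_cons_succ z t (e + 1),
        Hc_cons_succ y (z :: t) e]
      linear_combination y * ih

lemma Hc_swap (y z : R) (t : List R) : ∀ e : ℕ,
    Hc (y :: z :: t) e = Hc (z :: y :: t) e
  | 0 => by rw [Hc_zero, Hc_zero]
  | e + 1 => by
      have ih := Hc_swap y z t e
      have hs := Hc_sub y z t e
      rw [Hc_cons_succ y (z :: t) e, Hc_cons_succ z (y :: t) e]
      linear_combination z * ih - hs

/-- Cancellation by `X i - X j` in a multivariate polynomial ring. -/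
lemma X_sub_X_cancel {n : ℕ} {B : Type*} [CommRing B] {i j : Fin n} (hij : i ≠ j)
    {u v : MvPolynomial (Fin n) B}
    (h : (X i - X j) * u = (X i - X j) * v) : u = v := by
  cases n with
  | zero => exact i.elim0
  | succ m =>
    set σ := Equiv.swap i 0 with hσ
    let e := (renameEquiv B σ).trans (finSuccEquiv B m)
    have hXi : e (X i) = Polynomial.X := by
      simp [e, renameEquiv_apply, rename_X, hσ, Equiv.swap_apply_left, finSuccEquiv_X_zero]
    have hσj : σ j ≠ 0 := by
      rcases eq_or_ne j 0 with rfl | hj0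
      · simpa [hσ, Equiv.swap_apply_right] using hij
      · rw [hσ, Equiv.swap_apply_of_ne_of_ne (Ne.symm hij) hj0]
        exact hj0
    obtain ⟨k, hk⟩ := Fin.exists_succ_eq_of_ne_zero hσj
    have hXj : e (X j) = Polynomial.C (X k) := by
      simp only [e, AlgEquiv.trans_apply, renameEquiv_apply, rename_X]
      rw [← hk, finSuccEquiv_X_succ]
    have h2 : e ((X i - X j) * u) = e ((X i - X j) * v) := congrArg e h
    rw [map_mul, map_mul, map_sub, hXi, hXj] at h2
    have hmon := Polynomial.monic_X_sub_C (MvPolynomial.X (R := B) k)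
    exact e.injective (hmon.isRegular.left h2)

variable (n : ℕ) (B : Type*) [CommRing B]

noncomputable def xv (i : ℕ) : MvPolynomial (Fin n) B :=
  if h : i < n then X ⟨i, h⟩ else 0

noncomputable def Lx (m : ℕ) : List (MvPolynomial (Fin n) B) :=
  ((List.range (m + 1)).reverse).map (xv n B)

noncomputable def Tx (m : ℕ) : List (MvPolynomial (Fin n) B) :=
  ((List.range m).reverse).map (xv n B)

lemma Lx_eq (m : ℕ) : Lx n B m = xv n B m :: Tx n B m := by
  simp [Lx, Tx, List.range_succ]

lemma Tx_succ (m : ℕ) : Tx n B (m + 1) = Lx n B m := rfl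

lemma map_rename_Tx (σ : Fin n → Fin n) :
    ∀ (m : ℕ), (∀ (i : ℕ) (h : i < n), i < m → σ ⟨i, h⟩ = ⟨i, h⟩) →
      (Tx n B m).map (rename σ) = Tx n B m
  | 0, _ => rfl
  | m + 1, hσ => by
      rw [Tx_succ, Lx_eq, List.map_cons,
        map_rename_Tx σ m (fun i h hi => hσ i h (hi.trans (Nat.lt_succ_self m)))]
      congr 1
      by_cases h : m < n
      · rw [xv, dif_pos h, rename_X, hσ m h (Nat.lt_succ_self m)]
      · rw [xv, dif_neg h, map_zero]

end Stmt16Aux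

/-- Let `B` be a commutative algebra over a field `F`, and consider
`B ⊗ F[x₁,…,xₙ] = B[x₁,…,xₙ]`. Suppose `K` is a subset stable under the
transposition operators `s_k` and the difference operators `∂_k`
(characterized by `(x_k − x_{k+1})·∂_k(a) = s_k(a) − a`). If a polynomial
`f(x₁) = Σ_{j=0}^{d} c_j x₁^j` with coefficients `c_j ∈ B` and `d < n`
belongs to `K`, then the top coefficient `c_d` (as a constant) belongs
to `K`. -/
theorem stmt16 {F : Type*} [Field F] {B : Type*} [CommRing B] [Algebra F B]
    {n : ℕ} (d : ℕ) (hd : d < n)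
    (sw D : ∀ k : ℕ, k + 1 < n → MvPolynomial (Fin n) B → MvPolynomial (Fin n) B)
    (hsw : ∀ (k : ℕ) (hk : k + 1 < n) (a : MvPolynomial (Fin n) B),
      sw k hk a =
        rename ⇑(Equiv.swap (⟨k, Nat.lt_of_succ_lt hk⟩ : Fin n) ⟨k + 1, hk⟩) a)
    (hD : ∀ (k : ℕ) (hk : k + 1 < n) (a : MvPolynomial (Fin n) B),
      (X (⟨k, Nat.lt_of_succ_lt hk⟩ : Fin n) - X ⟨k + 1, hk⟩) * D k hk a
        = sw k hk a - a)
    (K : Set (MvPolynomial (Fin n) B))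
    (hKsw : ∀ (k : ℕ) (hk : k + 1 < n) (a : MvPolynomial (Fin n) B),
      a ∈ K → sw k hk a ∈ K)
    (hKD : ∀ (k : ℕ) (hk : k + 1 < n) (a : MvPolynomial (Fin n) B),
      a ∈ K → D k hk a ∈ K)
    (c : ℕ → B)
    (hf : (∑ j ∈ Finset.range (d + 1),
        C (c j) * X (⟨0, Nat.lt_of_le_of_lt (Nat.zero_le d) hd⟩ : Fin n) ^ j)
        ∈ K) :
    C (c d) ∈ K := by
  have h0 : (0 : ℕ) < n := Nat.lt_of_le_of_lt (Nat.zero_le d) hd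
  have key : ∀ m : ℕ, m ≤ d →
      (∑ j ∈ Finset.range (d + 1 - m),
        C (c (j + m)) * Stmt16Aux.Hc (Stmt16Aux.Lx n B m) j) ∈ K := by
    intro m
    induction m with
    | zero =>
      intro _
      have hL : Stmt16Aux.Lx n B 0 = [X (⟨0, h0⟩ : Fin n)] := by
        have ht : Stmt16Aux.Tx n B 0 = [] := rfl
        rw [Stmt16Aux.Lx_eq, ht, Stmt16Aux.xv, dif_pos h0]
      have hHc : ∀ j, Stmt16Aux.Hc (Stmt16Aux.Lx n B 0) j
          = X (⟨0, h0⟩ : Fin n) ^ j := fun j => by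
        rw [hL, Stmt16Aux.Hc_singleton]
      simpa [hHc] using hf
    | succ m ih =>
      intro hm1
      have hm' : m ≤ d := Nat.le_of_succ_le hm1
      have hk : m + 1 < n := Nat.lt_of_le_of_lt hm1 hd
      have hmn : m < n := Nat.lt_of_succ_lt hk
      set q : MvPolynomial (Fin n) B :=
        ∑ j ∈ Finset.range (d + 1 - m),
          C (c (j + m)) * Stmt16Aux.Hc (Stmt16Aux.Lx n B m) j with hq
      set q' : MvPolynomial (Fin n) B :=
        ∑ j ∈ Finset.range (d + 1 - (m + 1)),
          C (c (j + (m + 1))) * Stmt16Aux.Hc (Stmt16Aux.Lx n B (m + 1)) j with hq'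
      have hqK : q ∈ K := ih hm'
      have hLm : Stmt16Aux.Lx n B m
          = X (⟨m, Nat.lt_of_succ_lt hk⟩ : Fin n) :: Stmt16Aux.Tx n B m := by
        rw [Stmt16Aux.Lx_eq]
        congr 1
        rw [Stmt16Aux.xv, dif_pos hmn]
      have hLm1 : Stmt16Aux.Lx n B (m + 1)
          = X (⟨m + 1, hk⟩ : Fin n) :: X (⟨m, Nat.lt_of_succ_lt hk⟩ : Fin n)
            :: Stmt16Aux.Tx n B m := by
        rw [Stmt16Aux.Lx_eq, Stmt16Aux.Tx_succ, hLm]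
        congr 1
        rw [Stmt16Aux.xv, dif_pos hk]
      have hTfix : (Stmt16Aux.Tx n B m).map
          (rename ⇑(Equiv.swap (⟨m, Nat.lt_of_succ_lt hk⟩ : Fin n) ⟨m + 1, hk⟩))
          = Stmt16Aux.Tx n B m := by
        apply Stmt16Aux.map_rename_Tx
        intro i h hi
        exact Equiv.swap_apply_of_ne_of_ne
          (by simp only [ne_eq, Fin.mk.injEq]; omega)
          (by simp only [ne_eq, Fin.mk.injEq]; omega)
      have hswq : sw m hk q = ∑ j ∈ Finset.range (d + 1 - m),
          C (c (j + m)) *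
            Stmt16Aux.Hc (X (⟨m + 1, hk⟩ : Fin n) :: Stmt16Aux.Tx n B m) j := by
        rw [hsw, hq, map_sum]
        refine Finset.sum_congr rfl fun j _ => ?_
        rw [map_mul, rename_C]
        congr 1
        have hmap := Stmt16Aux.map_Hc
          ((rename ⇑(Equiv.swap (⟨m, Nat.lt_of_succ_lt hk⟩ : Fin n) ⟨m + 1, hk⟩)
            : MvPolynomial (Fin n) B →ₐ[B] MvPolynomial (Fin n) B).toRingHom)
          (Stmt16Aux.Lx n B m) j
        simp only [AlgHom.toRingHom_eq_coe, RingHom.coe_coe] at hmap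
        rw [hmap, hLm, List.map_cons, hTfix, rename_X, Equiv.swap_apply_left]
      have hss : sw m hk (sw m hk q) = q := by
        rw [hsw, hsw, rename_rename]
        have hid : (⇑(Equiv.swap (⟨m, Nat.lt_of_succ_lt hk⟩ : Fin n) ⟨m + 1, hk⟩)
            ∘ ⇑(Equiv.swap (⟨m, Nat.lt_of_succ_lt hk⟩ : Fin n) ⟨m + 1, hk⟩)) = id :=
          funext fun a => Equiv.swap_apply_self _ _ a
        rw [hid, rename_id, AlgHom.id_apply]
      have hkey : (X (⟨m, Nat.lt_of_succ_lt hk⟩ : Fin n) - X ⟨m + 1, hk⟩)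
            * D m hk (sw m hk q)
          = (X (⟨m, Nat.lt_of_succ_lt hk⟩ : Fin n) - X ⟨m + 1, hk⟩) * q' := by
        rw [hD, hss, hswq, hq, hq']
        have e1 : d + 1 - m = (d - m) + 1 := by omega
        have e2 : d + 1 - (m + 1) = d - m := by omega
        rw [hLm, e1, e2, ← Finset.sum_sub_distrib, Finset.sum_range_succ',
          Stmt16Aux.Hc_zero, Stmt16Aux.Hc_zero]
        have hterm : ∀ j : ℕ,
            C (c (j + 1 + m)) * Stmt16Aux.Hc
                (X (⟨m, Nat.lt_of_succ_lt hk⟩ : Fin n) :: Stmt16Aux.Tx n B m) (j + 1)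
              - C (c (j + 1 + m)) * Stmt16Aux.Hc
                (X (⟨m + 1, hk⟩ : Fin n) :: Stmt16Aux.Tx n B m) (j + 1)
            = (X (⟨m, Nat.lt_of_succ_lt hk⟩ : Fin n) - X ⟨m + 1, hk⟩)
              * (C (c (j + (m + 1))) * Stmt16Aux.Hc (Stmt16Aux.Lx n B (m + 1)) j) := by
          intro j
          have h1 := Stmt16Aux.Hc_sub (X (⟨m, Nat.lt_of_succ_lt hk⟩ : Fin n))
            (X (⟨m + 1, hk⟩ : Fin n)) (Stmt16Aux.Tx n B m) j
          have h2 := Stmt16Aux.Hc_swap (X (⟨m, Nat.lt_of_succ_lt hk⟩ : Fin n))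
            (X (⟨m + 1, hk⟩ : Fin n)) (Stmt16Aux.Tx n B m) j
          have hc' : j + 1 + m = j + (m + 1) := by omega
          rw [hLm1, hc', ← mul_sub, h1, h2]
          ring
        simp only [hterm]
        rw [← Finset.mul_sum]
        ring
      have hne : (⟨m, Nat.lt_of_succ_lt hk⟩ : Fin n) ≠ ⟨m + 1, hk⟩ :=
        by simp only [ne_eq, Fin.mk.injEq]; omega
      have hDq : D m hk (sw m hk q) = q' := Stmt16Aux.X_sub_X_cancel hne hkey
      exact hDq ▸ hKD m hk _ (hKsw m hk _ hqK)
  have hdK := key d le_rfl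
  have h1 : d + 1 - d = 1 := by omega
  rw [h1, Finset.sum_range_one, Stmt16Aux.Hc_zero, mul_one, Nat.zero_add] at hdK
  exact hdK
end

section
/- Let 𝒯 be an R-linear abelian monoidal category with ⊗ bi-exact. Suppose 0 → X' → X → X'' → 0 and 0 → Y'' → Y → Y' → 0 are exact, and suppose given ε' : X'⊗Y' → 𝟙, ε : X⊗Y → 𝟙, ε'' : X''⊗Y'' → 𝟙 and η' : 𝟙 → Y'⊗X', η : 𝟙 → Y⊗X, η'' : 𝟙 → Y''⊗X'' making the natural comparison diagrams commute up to invertible scalar multiples. If (ε', η') and (ε'', η'') are quasi-adjunctions, then (ε, η) is a quasi-adjunction. -/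
open CategoryTheory MonoidalCategory Limits

lemma stmt19_smul_isIso {R : Type*} [CommRing R] {C : Type*} [Category C]
    [Preadditive C] [CategoryTheory.Linear R C] {A B : C} (c : Rˣ) (u : A ⟶ B)
    (hu : IsIso u) : IsIso ((c : R) • u) := by
  refine ⟨⟨((c⁻¹ : Rˣ) : R) • inv u, ?_, ?_⟩⟩ <;>
    simp [Linear.smul_comp, Linear.comp_smul, smul_smul, ← Units.val_mul]

lemma stmt19_five {C : Type*} [Category C] [Abelian C] {A B D : C}
    {f : A ⟶ B} {f' : B ⟶ D} {w : f ≫ f' = 0}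
    (h : (ShortComplex.mk f f' w).ShortExact)
    {a : A ⟶ A} {u : B ⟶ B} {b : D ⟶ D}
    (h1 : a ≫ f = f ≫ u) (h2 : u ≫ f' = f' ≫ b)
    (ha : IsIso a) (hb : IsIso b) : IsIso u := by
  let φ : ShortComplex.mk f f' w ⟶ ShortComplex.mk f f' w :=
    { τ₁ := a, τ₂ := u, τ₃ := b, comm₁₂ := h1, comm₂₃ := h2 }
  have h1 : IsIso φ.τ₁ := ha
  have h3 : IsIso φ.τ₃ := hb
  exact ShortComplex.isIso₂_of_shortExact_of_isIso₁₃ φ h h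

/-- In an `R`-linear abelian monoidal category with bi-exact `⊗`, given short
exact sequences `0 → X' → X → X'' → 0` and `0 → Y'' → Y → Y' → 0`, and
(co)evaluation morphisms `ε', ε, ε''` and `η', η, η''` making the comparison
diagrams commute up to invertible scalars, if `(ε', η')` and `(ε'', η'')` are
quasi-adjunctions then so is `(ε, η)`. -/
theorem stmt19 {R : Type*} [CommRing R] {C : Type*} [Category C] [Abelian C]
    [CategoryTheory.Linear R C] [MonoidalCategory C] [MonoidalPreadditive C]
    [MonoidalLinear R C]
    [∀ X : C, PreservesFiniteLimits (tensorLeft X)]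
    [∀ X : C, PreservesFiniteColimits (tensorLeft X)]
    [∀ X : C, PreservesFiniteLimits (tensorRight X)]
    [∀ X : C, PreservesFiniteColimits (tensorRight X)]
    {X' X X'' Y' Y Y'' : C}
    (f : X' ⟶ X) (f' : X ⟶ X'') (wX : f ≫ f' = 0)
    (g' : Y'' ⟶ Y) (g : Y ⟶ Y') (wY : g' ≫ g = 0)
    (hX : (ShortComplex.mk f f' wX).ShortExact)
    (hY : (ShortComplex.mk g' g wY).ShortExact)
    (ε' : X' ⊗ Y' ⟶ 𝟙_ C) (ε : X ⊗ Y ⟶ 𝟙_ C) (ε'' : X'' ⊗ Y'' ⟶ 𝟙_ C)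
    (η' : 𝟙_ C ⟶ Y' ⊗ X') (η : 𝟙_ C ⟶ Y ⊗ X) (η'' : 𝟙_ C ⟶ Y'' ⊗ X'')
    (hc1 : ∃ c : Rˣ, f ▷ Y ≫ ε = (c : R) • (X' ◁ g ≫ ε'))
    (hc2 : ∃ c : Rˣ, X ◁ g' ≫ ε = (c : R) • (f' ▷ Y'' ≫ ε''))
    (hc3 : ∃ c : Rˣ, η' ≫ Y' ◁ f = (c : R) • (η ≫ g ▷ X))
    (hc4 : ∃ c : Rˣ, η'' ≫ g' ▷ X'' = (c : R) • (η ≫ Y ◁ f'))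
    (hqa' : IsIso (X' ◁ η' ≫ (α_ X' Y' X').inv ≫ ε' ▷ X') ∧
            IsIso (η' ▷ Y' ≫ (α_ Y' X' Y').hom ≫ Y' ◁ ε'))
    (hqa'' : IsIso (X'' ◁ η'' ≫ (α_ X'' Y'' X'').inv ≫ ε'' ▷ X'') ∧
             IsIso (η'' ▷ Y'' ≫ (α_ Y'' X'' Y'').hom ≫ Y'' ◁ ε'')) :
    IsIso (X ◁ η ≫ (α_ X Y X).inv ≫ ε ▷ X) ∧
    IsIso (η ▷ Y ≫ (α_ Y X Y).hom ≫ Y ◁ ε) := by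
  obtain ⟨c1, hc1⟩ := hc1
  obtain ⟨c2, hc2⟩ := hc2
  obtain ⟨c3, hc3⟩ := hc3
  obtain ⟨c4, hc4⟩ := hc4
  have e3 : η ≫ g ▷ X = ((c3⁻¹ : Rˣ) : R) • (η' ≫ Y' ◁ f) := by
    rw [hc3, smul_smul, ← Units.val_mul, inv_mul_cancel]; simp
  have e4 : η ≫ Y ◁ f' = ((c4⁻¹ : Rˣ) : R) • (η'' ≫ g' ▷ X'') := by
    rw [hc4, smul_smul, ← Units.val_mul, inv_mul_cancel]; simp
  -- abbreviations
  set u' : X' ⟶ X' :=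
    (ρ_ X').inv ≫ (X' ◁ η' ≫ (α_ X' Y' X').inv ≫ ε' ▷ X') ≫ (λ_ X').hom with hu'
  set u'' : X'' ⟶ X'' :=
    (ρ_ X'').inv ≫ (X'' ◁ η'' ≫ (α_ X'' Y'' X'').inv ≫ ε'' ▷ X'') ≫ (λ_ X'').hom with hu''
  set u : X ⟶ X :=
    (ρ_ X).inv ≫ (X ◁ η ≫ (α_ X Y X).inv ≫ ε ▷ X) ≫ (λ_ X).hom with hu
  set v' : Y' ⟶ Y' :=
    (λ_ Y').inv ≫ (η' ▷ Y' ≫ (α_ Y' X' Y').hom ≫ Y' ◁ ε') ≫ (ρ_ Y').hom with hv'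
  set v'' : Y'' ⟶ Y'' :=
    (λ_ Y'').inv ≫ (η'' ▷ Y'' ≫ (α_ Y'' X'' Y'').hom ≫ Y'' ◁ ε'') ≫ (ρ_ Y'').hom with hv''
  set v : Y ⟶ Y :=
    (λ_ Y).inv ≫ (η ▷ Y ≫ (α_ Y X Y).hom ≫ Y ◁ ε) ≫ (ρ_ Y).hom with hv
  have hiu' : IsIso u' := by
    have := hqa'.1; rw [hu']; infer_instance
  have hiu'' : IsIso u'' := by
    have := hqa''.1; rw [hu'']; infer_instance
  have hiv' : IsIso v' := by
    have := hqa'.2; rw [hv']; infer_instance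
  have hiv'' : IsIso v'' := by
    have := hqa''.2; rw [hv'']; infer_instance
  have key1 : f ≫ u = ((c1 * c3⁻¹ : Rˣ) : R) • (u' ≫ f) := by
    rw [hu, hu']
    simp only [Category.assoc]
    rw [rightUnitor_inv_naturality_assoc, ← whisker_exchange_assoc,
      associator_inv_naturality_left_assoc, ← comp_whiskerRight_assoc, hc1]
    simp only [MonoidalLinear.smul_whiskerRight, Linear.smul_comp, Linear.comp_smul,
      comp_whiskerRight, Category.assoc]
    rw [← associator_inv_naturality_middle_assoc, ← MonoidalCategory.whiskerLeft_comp_assoc, e3]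
    simp only [MonoidalLinear.whiskerLeft_smul, Linear.smul_comp, Linear.comp_smul,
      MonoidalCategory.whiskerLeft_comp, Category.assoc, smul_smul]
    rw [associator_inv_naturality_right_assoc, whisker_exchange_assoc,
      leftUnitor_naturality]
    simp [mul_comm]
  have key2 : u ≫ f' = ((c2 * c4⁻¹ : Rˣ) : R) • (f' ≫ u'') := by
    rw [hu, hu'']
    simp only [Category.assoc]
    rw [← leftUnitor_naturality, ← whisker_exchange_assoc,
      ← associator_inv_naturality_right_assoc,
      ← MonoidalCategory.whiskerLeft_comp_assoc, e4]
    simp only [MonoidalLinear.whiskerLeft_smul, Linear.smul_comp, Linear.comp_smul,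
      MonoidalCategory.whiskerLeft_comp, Category.assoc]
    rw [associator_inv_naturality_middle_assoc, ← comp_whiskerRight_assoc, hc2]
    simp only [MonoidalLinear.smul_whiskerRight, Linear.smul_comp, Linear.comp_smul,
      comp_whiskerRight, Category.assoc, smul_smul]
    rw [← associator_inv_naturality_left_assoc, whisker_exchange_assoc,
      ← rightUnitor_inv_naturality_assoc]
    simp [mul_comm]
  have l1 : g' ≫ v = ((c2 * c4⁻¹ : Rˣ) : R) • (v'' ≫ g') := by
    rw [hv, hv'']
    simp only [Category.assoc]
    rw [leftUnitor_inv_naturality_assoc, whisker_exchange_assoc,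
      associator_naturality_right_assoc, ← MonoidalCategory.whiskerLeft_comp_assoc, hc2]
    simp only [MonoidalLinear.whiskerLeft_smul, Linear.smul_comp, Linear.comp_smul,
      MonoidalCategory.whiskerLeft_comp, Category.assoc]
    rw [← associator_naturality_middle_assoc, ← comp_whiskerRight_assoc, e4]
    simp only [MonoidalLinear.smul_whiskerRight, Linear.smul_comp, Linear.comp_smul,
      comp_whiskerRight, Category.assoc, smul_smul]
    rw [associator_naturality_left_assoc, ← whisker_exchange_assoc,
      rightUnitor_naturality]
    simp [mul_comm]
  have l2 : v ≫ g = ((c1 * c3⁻¹ : Rˣ) : R) • (g ≫ v') := by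
    rw [hv, hv']
    simp only [Category.assoc]
    rw [← rightUnitor_naturality, whisker_exchange_assoc,
      ← associator_naturality_left_assoc, ← comp_whiskerRight_assoc, e3]
    simp only [MonoidalLinear.smul_whiskerRight, Linear.smul_comp, Linear.comp_smul,
      comp_whiskerRight, Category.assoc]
    rw [associator_naturality_middle_assoc, ← MonoidalCategory.whiskerLeft_comp_assoc, hc1]
    simp only [MonoidalLinear.whiskerLeft_smul, Linear.smul_comp, Linear.comp_smul,
      MonoidalCategory.whiskerLeft_comp, Category.assoc, smul_smul]
    rw [← associator_naturality_right_assoc, ← whisker_exchange_assoc,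
      ← leftUnitor_inv_naturality_assoc]
    simp [mul_comm]
  have hIu : IsIso u :=
    stmt19_five hX (a := ((c1 * c3⁻¹ : Rˣ) : R) • u') (b := ((c2 * c4⁻¹ : Rˣ) : R) • u'')
      (by rw [Linear.smul_comp, ← key1]) (by rw [key2, Linear.comp_smul])
      (stmt19_smul_isIso _ _ hiu') (stmt19_smul_isIso _ _ hiu'')
  have hIv : IsIso v :=
    stmt19_five hY (a := ((c2 * c4⁻¹ : Rˣ) : R) • v'') (b := ((c1 * c3⁻¹ : Rˣ) : R) • v')
      (by rw [Linear.smul_comp, ← l1]) (by rw [l2, Linear.comp_smul])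
      (stmt19_smul_isIso _ _ hiv'') (stmt19_smul_isIso _ _ hiv')
  constructor
  · have h1 : X ◁ η ≫ (α_ X Y X).inv ≫ ε ▷ X = (ρ_ X).hom ≫ u ≫ (λ_ X).inv := by
      rw [hu]; simp
    rw [h1]; infer_instance
  · have h2 : η ▷ Y ≫ (α_ Y X Y).hom ≫ Y ◁ ε = (λ_ Y).hom ≫ v ≫ (ρ_ Y).inv := by
      rw [hv]; simp
    rw [h2]; infer_instance
end
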